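/- Let S be a finite nonempty set, δ ∈ [0, π/2], and ξ : S → ℂ with ξ_x ≠ 0 for all x ∈ S, such that |arg(ξ_x / ξ_y)| ≤ δ for all x, y ∈ S. Then for every x ∈ S: |Σ_{y∈S} ξ_y| ≥ |ξ_x|; in particular Σ_{y∈S} ξ_y ≠ 0, and moreover |arg((Σ_{y∈S} ξ_y) / ξ_x)| ≤ δ. -/

import Mathlib

open Real

lemma aux_abs_sin_le_sin {a δ : ℝ} (h : |a| ≤ δ) (hδ : δ ≤ π / 2) :
    |Real.sin a| ≤ Real.sin δ := by
  have hδ0 : 0 ≤ δ := (abs_nonneg a).trans h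
  have habs : |Real.sin a| = Real.sin |a| := by
    rcases le_or_gt 0 a with ha | ha
    · rw [abs_of_nonneg ha, abs_of_nonneg]
      exact Real.sin_nonneg_of_nonneg_of_le_pi ha
        (by nlinarith [Real.pi_pos, (abs_of_nonneg ha ▸ h : a ≤ δ)])
    · have ha' : -π ≤ a := by nlinarith [Real.pi_pos, (abs_le.mp h).1]
      rw [abs_of_neg ha, abs_of_nonpos (Real.sin_nonpos_of_nonpos_of_neg_pi_le ha.le ha'),
        Real.sin_neg]
  rw [habs]
  exact Real.sin_le_sin_of_le_of_le_pi_div_two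
    (by linarith [abs_nonneg a, Real.pi_pos]) hδ h

theorem sum_of_aligned_complex_numbers
    {S : Type*} [Fintype S] [Nonempty S]
    (δ : ℝ) (hδ : δ ∈ Set.Icc (0 : ℝ) (Real.pi / 2))
    (ξ : S → ℂ) (hξ : ∀ x, ξ x ≠ 0)
    (harg : ∀ x y : S, |(ξ x / ξ y).arg| ≤ δ) :
    ∀ x : S,
      ‖ξ x‖ ≤ ‖∑ y, ξ y‖ ∧
      (∑ y, ξ y) ≠ 0 ∧
      |((∑ y, ξ y) / ξ x).arg| ≤ δ := by
  obtain ⟨hδ0, hδπ⟩ := hδ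
  intro x
  set w : S → ℂ := fun y => ξ y / ξ x with hw
  have hwne : ∀ y, w y ≠ 0 := fun y => div_ne_zero (hξ y) (hξ x)
  have hwpos : ∀ y, 0 < ‖w y‖ := fun y => norm_pos_iff.mpr (hwne y)
  set z : ℂ := ∑ y, w y with hz
  have hsum : (∑ y, ξ y) / ξ x = z := by rw [hz, Finset.sum_div]
  have hcosδ : 0 ≤ Real.cos δ := Real.cos_nonneg_of_mem_Icc ⟨by linarith [Real.pi_pos], hδπ⟩
  -- per-term real part bound
  have hre : ∀ y, Real.cos δ * ‖w y‖ ≤ (w y).re := by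
    intro y
    have h1 : Real.cos ((w y).arg) = (w y).re / ‖w y‖ :=
      Complex.cos_arg (hwne y)
    have h2 : Real.cos δ ≤ Real.cos ((w y).arg) := by
      rw [← Real.cos_abs ((w y).arg)]
      exact Real.cos_le_cos_of_nonneg_of_le_pi (abs_nonneg _)
        (by linarith [Real.pi_pos]) (harg y x)
    calc Real.cos δ * ‖w y‖ ≤ Real.cos ((w y).arg) * ‖w y‖ := by
          exact mul_le_mul_of_nonneg_right h2 (hwpos y).le
      _ = (w y).re := by rw [h1, div_mul_cancel₀ _ (hwpos y).ne']
  have hre0 : ∀ y, 0 ≤ (w y).re := fun y =>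
    le_trans (by positivity) (hre y)
  -- per-term imaginary part bound
  have him : ∀ y, |(w y).im| ≤ Real.sin δ * ‖w y‖ := by
    intro y
    have h1 : Real.sin ((w y).arg) = (w y).im / ‖w y‖ :=
      Complex.sin_arg (w y)
    have h2 : |Real.sin ((w y).arg)| ≤ Real.sin δ := aux_abs_sin_le_sin (harg y x) hδπ
    have : (w y).im = Real.sin ((w y).arg) * ‖w y‖ := by
      rw [h1, div_mul_cancel₀ _ (hwpos y).ne']
    rw [this, abs_mul, abs_of_nonneg (hwpos y).le]
    exact mul_le_mul_of_nonneg_right h2 (hwpos y).le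
  set A : ℝ := ∑ y, ‖w y‖ with hA
  have hApos : 0 < A := Finset.sum_pos (fun y _ => hwpos y) Finset.univ_nonempty
  have hzre : z.re = ∑ y, (w y).re := by rw [hz, Complex.re_sum]
  have hzim : z.im = ∑ y, (w y).im := by rw [hz, Complex.im_sum]
  have hre_sum : Real.cos δ * A ≤ z.re := by
    rw [hzre, hA, Finset.mul_sum]
    exact Finset.sum_le_sum fun y _ => hre y
  have him_sum : |z.im| ≤ Real.sin δ * A := by
    rw [hzim, hA, Finset.mul_sum]
    exact (Finset.abs_sum_le_sum_abs _ _).trans (Finset.sum_le_sum fun y _ => him y)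
  have hwx : w x = 1 := div_self (hξ x)
  have hre1 : 1 ≤ z.re := by
    rw [hzre]
    have := Finset.single_le_sum (f := fun y => (w y).re) (fun y _ => hre0 y)
      (Finset.mem_univ x)
    simpa [hwx] using this
  have habsz : 1 ≤ ‖z‖ := hre1.trans (Complex.re_le_norm z)
  clear_value w A z
  have hsum_eq : (∑ y, ξ y) = z * ξ x := by
    rw [← hsum, div_mul_cancel₀ _ (hξ x)]
  have h1 : ‖ξ x‖ ≤ ‖∑ y, ξ y‖ := by
    rw [hsum_eq, norm_mul]
    nlinarith [norm_pos_iff.mpr (hξ x), norm_nonneg (ξ x)]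
  have h2 : (∑ y, ξ y) ≠ 0 := fun h => by
    have := norm_pos_iff.mpr (hξ x)
    rw [h, norm_zero] at h1; linarith
  refine ⟨h1, h2, ?_⟩
  rw [hsum]
  have hzre_pos : 0 < z.re := lt_of_lt_of_le one_pos hre1
  rcases eq_or_lt_of_le hδπ with heq | hlt
  · rw [heq]
    exact (Complex.abs_arg_lt_pi_div_two_iff.mpr (Or.inl hzre_pos)).le
  · have hcospos : 0 < Real.cos δ := Real.cos_pos_of_mem_Ioo
      ⟨by linarith [Real.pi_pos], hlt⟩
    have hargz : z.arg = Real.arctan (z.im / z.re) := by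
      have h3 : |z.arg| < π / 2 := Complex.abs_arg_lt_pi_div_two_iff.mpr (Or.inl hzre_pos)
      rw [← Complex.tan_arg z, Real.arctan_tan (by linarith [abs_lt.mp h3]) (abs_lt.mp h3).2]
    rw [hargz]
    have hratio : |z.im / z.re| ≤ Real.tan δ := by
      rw [abs_div, abs_of_pos hzre_pos, Real.tan_eq_sin_div_cos]
      calc |z.im| / z.re ≤ (Real.sin δ * A) / (Real.cos δ * A) :=
            div_le_div₀ (mul_nonneg (Real.sin_nonneg_of_nonneg_of_le_pi hδ0
              (by linarith [Real.pi_pos])) hApos.le) him_sum (by positivity) hre_sum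
        _ = Real.sin δ / Real.cos δ := by
            rw [mul_div_mul_right _ _ hApos.ne']
    have habs_arctan : |Real.arctan (z.im / z.re)| = Real.arctan |z.im / z.re| := by
      rcases le_or_gt 0 (z.im / z.re) with h | h
      · rw [abs_of_nonneg h, abs_of_nonneg]
        rw [← Real.arctan_zero]
        exact Real.arctan_strictMono.monotone h
      · rw [abs_of_neg h, abs_of_neg, Real.arctan_neg]
        rw [← Real.arctan_zero]
        exact Real.arctan_strictMono h
    rw [habs_arctan]
    calc Real.arctan |z.im / z.re| ≤ Real.arctan (Real.tan δ) :=
          Real.arctan_strictMono.monotone hratio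
      _ = δ := Real.arctan_tan (by linarith [Real.pi_pos]) hlt
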